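/- (Bounds consistency theorem 2, z-part.) Let D_x, D_y, D_z be nonempty integer intervals with D_z ⊆ int(D_x·D_y). Then for every c ∈ D_z there exist reals a in the real hull of D_x and b in the real hull of D_y with a·b = c. -/

import Mathlib

lemma aux_mul_le_corners {α : Type*} [Ring α] [LinearOrder α] [IsStrictOrderedRing α] {lx hx ly hy a b : α}
    (h1 : lx ≤ a) (h2 : a ≤ hx) (h3 : ly ≤ b) (h4 : b ≤ hy) :
    a * b ≤ max (max (lx * ly) (lx * hy)) (max (hx * ly) (hx * hy)) := by
  rcases le_total 0 a with ha | ha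
  · have h : a * b ≤ a * hy := mul_le_mul_of_nonneg_left h4 ha
    rcases le_total 0 hy with hhy | hhy
    · exact h.trans ((mul_le_mul_of_nonneg_right h2 hhy).trans
        (le_max_of_le_right (le_max_right _ _)))
    · exact h.trans ((mul_le_mul_of_nonpos_right h1 hhy).trans
        (le_max_of_le_left (le_max_right _ _)))
  · have h : a * b ≤ a * ly := mul_le_mul_of_nonpos_left h3 ha
    rcases le_total 0 ly with hly | hly
    · exact h.trans ((mul_le_mul_of_nonneg_right h2 hly).trans
        (le_max_of_le_right (le_max_left _ _)))
    · exact h.trans ((mul_le_mul_of_nonpos_right h1 hly).trans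
        (le_max_of_le_left (le_max_left _ _)))

lemma aux_corners_le_mul {α : Type*} [Ring α] [LinearOrder α] [IsStrictOrderedRing α] {lx hx ly hy a b : α}
    (h1 : lx ≤ a) (h2 : a ≤ hx) (h3 : ly ≤ b) (h4 : b ≤ hy) :
    min (min (lx * ly) (lx * hy)) (min (hx * ly) (hx * hy)) ≤ a * b := by
  have h := aux_mul_le_corners (lx := -hx) (hx := -lx) (ly := ly) (hy := hy)
    (a := -a) (b := b) (neg_le_neg h2) (neg_le_neg h1) h3 h4
  have h' : -(a * b) ≤ max (max (-(hx * ly)) (-(hx * hy))) (max (-(lx * ly)) (-(lx * hy))) := by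
    simpa [neg_mul] using h
  rw [max_neg_neg, max_neg_neg, max_neg_neg, neg_le_neg_iff] at h'
  calc min (min (lx * ly) (lx * hy)) (min (hx * ly) (hx * hy))
      = min (min (hx * ly) (hx * hy)) (min (lx * ly) (lx * hy)) := min_comm _ _
    _ ≤ a * b := h'

/-- Bounds consistency theorem 2, z-part: if `D_z ⊆ int(D_x·D_y)` for nonempty integer
intervals, then every `c ∈ D_z` admits a real factorization `c = a·b` with `a` in the
real hull of `D_x` and `b` in the real hull of `D_y`. -/
theorem stmt_16 (lx hx ly hy lz hz : ℤ)
    (hx' : lx ≤ hx) (hy' : ly ≤ hy) (hz' : lz ≤ hz)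
    (hsub : ∀ c ∈ Set.Icc lz hz, ∀ l h : ℤ,
      Set.image2 (· * ·) (Set.Icc lx hx) (Set.Icc ly hy) ⊆ Set.Icc l h →
        c ∈ Set.Icc l h) :
    ∀ c ∈ Set.Icc lz hz, ∃ a b : ℝ,
      a ∈ Set.Icc (lx : ℝ) (hx : ℝ) ∧ b ∈ Set.Icc (ly : ℝ) (hy : ℝ) ∧
        a * b = (c : ℝ) := by
  intro c hc
  set L : ℤ := min (min (lx * ly) (lx * hy)) (min (hx * ly) (hx * hy)) with hLdef
  set H : ℤ := max (max (lx * ly) (lx * hy)) (max (hx * ly) (hx * hy)) with hHdef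
  have hcLH : c ∈ Set.Icc L H := by
    apply hsub c hc
    rintro z ⟨a, ⟨ha1, ha2⟩, b, ⟨hb1, hb2⟩, rfl⟩
    exact ⟨aux_corners_le_mul ha1 ha2 hb1 hb2, aux_mul_le_corners ha1 ha2 hb1 hb2⟩
  set S : Set ℝ := Set.image2 (· * ·) (Set.Icc (lx : ℝ) hx) (Set.Icc (ly : ℝ) hy) with hS
  have hconn : IsPreconnected S := by
    rw [hS, ← Set.image_prod]
    exact (isPreconnected_Icc.prod isPreconnected_Icc).image _
      (continuous_fst.mul continuous_snd).continuousOn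
  have hord : S.OrdConnected := hconn.ordConnected
  -- corners belong to S
  have hmem : ∀ a b : ℤ, a ∈ Set.Icc lx hx → b ∈ Set.Icc ly hy →
      ((a * b : ℤ) : ℝ) ∈ S := by
    rintro a b ⟨ha1, ha2⟩ ⟨hb1, hb2⟩
    refine ⟨(a : ℝ), ⟨by exact_mod_cast ha1, by exact_mod_cast ha2⟩,
      (b : ℝ), ⟨by exact_mod_cast hb1, by exact_mod_cast hb2⟩, by push_cast; ring⟩
  have hLmem : ((L : ℤ) : ℝ) ∈ S := by
    rcases min_cases (min (lx * ly) (lx * hy)) (min (hx * ly) (hx * hy)) with ⟨h, _⟩ | ⟨h, _⟩ <;>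
      rw [hLdef, h]
    · rcases min_cases (lx * ly) (lx * hy) with ⟨h2, _⟩ | ⟨h2, _⟩ <;> rw [h2]
      · exact hmem lx ly ⟨le_rfl, hx'⟩ ⟨le_rfl, hy'⟩
      · exact hmem lx hy ⟨le_rfl, hx'⟩ ⟨hy', le_rfl⟩
    · rcases min_cases (hx * ly) (hx * hy) with ⟨h2, _⟩ | ⟨h2, _⟩ <;> rw [h2]
      · exact hmem hx ly ⟨hx', le_rfl⟩ ⟨le_rfl, hy'⟩
      · exact hmem hx hy ⟨hx', le_rfl⟩ ⟨hy', le_rfl⟩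
  have hHmem : ((H : ℤ) : ℝ) ∈ S := by
    rcases max_cases (max (lx * ly) (lx * hy)) (max (hx * ly) (hx * hy)) with ⟨h, _⟩ | ⟨h, _⟩ <;>
      rw [hHdef, h]
    · rcases max_cases (lx * ly) (lx * hy) with ⟨h2, _⟩ | ⟨h2, _⟩ <;> rw [h2]
      · exact hmem lx ly ⟨le_rfl, hx'⟩ ⟨le_rfl, hy'⟩
      · exact hmem lx hy ⟨le_rfl, hx'⟩ ⟨hy', le_rfl⟩
    · rcases max_cases (hx * ly) (hx * hy) with ⟨h2, _⟩ | ⟨h2, _⟩ <;> rw [h2]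
      · exact hmem hx ly ⟨hx', le_rfl⟩ ⟨le_rfl, hy'⟩
      · exact hmem hx hy ⟨hx', le_rfl⟩ ⟨hy', le_rfl⟩
  have hcS : ((c : ℤ) : ℝ) ∈ S := by
    apply hord.out hLmem hHmem
    exact ⟨by exact_mod_cast hcLH.1, by exact_mod_cast hcLH.2⟩
  obtain ⟨a, ha, b, hb, hab⟩ := hcS
  exact ⟨a, b, ha, hb, hab⟩
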